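/- Negative association of token locations: fix rounds t₁ < t₂, a fixed matching sequence, and a fixed location vector at round t₁. Then for any set B of tokens and any set D of nodes, Pr[⋂_{i∈B} {W_i^{(t₂)} ∈ D}] ≤ ∏_{i∈B} M^{[t₁+1,t₂]}_{w_i, D}, where w_i is token i's location at round t₁ and M_{u,D} = ∑_{v∈D} M_{u,v}. -/

import Mathlib

set_option linter.unusedSectionVars false

namespace HSNA

variable {n : ℕ} {T : Type*} [Fintype T] [DecidableEq T]

/-- number of tokens at node `u`. -/
def Xc (Wc : T → Fin n) (u : Fin n) : ℕ := (Finset.univ.filter fun j => Wc j = u).card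

variable (σ' : Fin n → Fin n) (Wc : T → Fin n) (Hc : T → ℕ)

/-- threshold for being a "low" token. -/
def mth (i : T) : ℕ := (Xc Wc (Wc i) + Xc Wc (σ' (Wc i))) / 2

/-- new height after one round. -/
def nH (i : T) : ℕ :=
  if Hc i ≤ mth σ' Wc i then Hc i
  else Hc i - (Xc Wc (Wc i) - Xc Wc (σ' (Wc i))) / 2

/-- coin key of a token. -/
def keyf (i : T) : Fin n × ℕ := (min (Wc i) (σ' (Wc i)), nH σ' Wc Hc i)

/-- location after the round, as a function of the coin value. -/
def outf (i : T) (b : Bool) : Fin n :=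
  if σ' (Wc i) = Wc i then Wc i
  else if Hc i ≤ mth σ' Wc i then (if b then σ' (Wc i) else Wc i)
  else if b then Wc i else σ' (Wc i)

/-- the height invariant. -/
def Invd : Prop :=
  (∀ i j, i ≠ j → Wc i = Wc j → Hc i ≠ Hc j) ∧ ∀ i, 1 ≤ Hc i ∧ Hc i ≤ Xc Wc (Wc i)

variable {σ' Wc Hc}

lemma Xc_le_card (u : Fin n) : Xc Wc u ≤ Fintype.card T :=
  Finset.card_filter_le _ _

lemma surj (hI : Invd Wc Hc) (u : Fin n) (hh : ℕ) (h1 : 1 ≤ hh) (h2 : hh ≤ Xc Wc u) :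
    ∃ j, Wc j = u ∧ Hc j = hh := by
  have hs := Finset.surj_on_of_inj_on_of_card_le
    (s := Finset.univ.filter fun j => Wc j = u) (t := Finset.Icc 1 (Xc Wc u))
    (fun a _ => Hc a)
    (by
      intro a ha
      simp only [Finset.mem_filter, Finset.mem_univ, true_and] at ha
      simp only [Finset.mem_Icc]
      exact ⟨(hI.2 a).1, by rw [← ha]; exact (hI.2 a).2⟩)
    (by
      intro a₁ a₂ ha₁ ha₂ hEq
      by_contra hne
      simp only [Finset.mem_filter, Finset.mem_univ, true_and] at ha₁ ha₂
      exact hI.1 a₁ a₂ hne (ha₁.trans ha₂.symm) hEq)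
    (by
      rw [Nat.card_Icc]
      simp [Xc])
  obtain ⟨a, ha, hEq⟩ := hs hh (by simp [Finset.mem_Icc]; omega)
  simp only [Finset.mem_filter, Finset.mem_univ, true_and] at ha
  exact ⟨a, ha, hEq.symm⟩

lemma nH_le (i : T) : nH σ' Wc Hc i ≤ Hc i := by
  unfold nH; split <;> omega

lemma nH_pos (hI : Invd Wc Hc) (i : T) : 1 ≤ nH σ' Wc Hc i := by
  have h1 := (hI.2 i).1
  have h2 := (hI.2 i).2
  unfold nH
  split
  · exact h1
  · rename_i hlow
    unfold mth at hlow
    omega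

lemma out_mem (i : T) (b : Bool) :
    outf σ' Wc Hc i b = Wc i ∨ outf σ' Wc Hc i b = σ' (Wc i) := by
  unfold outf
  split
  · exact Or.inl rfl
  · split <;> cases b <;> simp

lemma edge_of_min_eq (hσ : ∀ u, σ' (σ' u) = u) {x y : Fin n}
    (hxy : min x (σ' x) = min y (σ' y)) : x = y ∨ x = σ' y := by
  rcases min_cases x (σ' x) with ⟨h1, -⟩ | ⟨h1, -⟩ <;>
    rcases min_cases y (σ' y) with ⟨h2, -⟩ | ⟨h2, -⟩ <;>
      rw [h1, h2] at hxy
  · exact Or.inl hxy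
  · exact Or.inr hxy
  · -- σ' x = y
    right
    rw [← hxy, hσ]
  · -- σ' x = σ' y
    left
    have := congrArg σ' hxy
    rwa [hσ, hσ] at this


lemma out_ne (hσ : ∀ u, σ' (σ' u) = u) (hI : Invd Wc Hc) {i j : T} (hij : i ≠ j)
    (hi : σ' (Wc i) ≠ Wc i) (hj : σ' (Wc j) ≠ Wc j)
    (hk : keyf σ' Wc Hc i = keyf σ' Wc Hc j) (b : Bool) :
    outf σ' Wc Hc i b ≠ outf σ' Wc Hc j b := by
  have hmin : min (Wc i) (σ' (Wc i)) = min (Wc j) (σ' (Wc j)) := congrArg Prod.fst hk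
  have hnH : nH σ' Wc Hc i = nH σ' Wc Hc j := congrArg Prod.snd hk
  obtain ⟨hIi1, hIi2⟩ := hI.2 i
  obtain ⟨hIj1, hIj2⟩ := hI.2 j
  rcases edge_of_min_eq hσ hmin with hsame | hopp
  · -- same node
    have hXs : Xc Wc (Wc j) = Xc Wc (Wc i) := by rw [hsame]
    have hXs' : Xc Wc (σ' (Wc j)) = Xc Wc (σ' (Wc i)) := by rw [hsame]
    by_cases hli : Hc i ≤ (Xc Wc (Wc i) + Xc Wc (σ' (Wc i))) / 2 <;>
      by_cases hlj : Hc j ≤ (Xc Wc (Wc i) + Xc Wc (σ' (Wc i))) / 2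
    · -- both low
      exfalso
      apply hI.1 i j hij hsame
      simp only [nH, mth, hXs, hXs'] at hnH
      simp only [hli, hlj, ↓reduceIte] at hnH
      exact hnH
    · -- i low, j high
      simp only [outf, mth, hXs, hXs', ← hsame]
      rw [if_neg hi, if_neg hi]
      simp only [hli, hlj, ↓reduceIte]
      cases b
      · simp only [Bool.false_eq_true, if_false]
        exact fun e => hi e.symm
      · simp only [if_true]
        exact hi
    · -- i high, j low
      simp only [outf, mth, hXs, hXs', ← hsame]
      rw [if_neg hi, if_neg hi]
      simp only [hli, hlj, ↓reduceIte]
      cases b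
      · simp only [Bool.false_eq_true, if_false]
        exact hi
      · simp only [if_true]
        exact fun e => hi e.symm
    · -- both high
      exfalso
      apply hI.1 i j hij hsame
      simp only [nH, mth, hXs, hXs'] at hnH
      simp only [hli, hlj, ↓reduceIte] at hnH
      rw [← hsame] at hIj2
      omega
  · -- opposite nodes : Wc i = σ' (Wc j)
    have e1 : σ' (Wc i) = Wc j := by rw [hopp, hσ]
    have hXs : Xc Wc (Wc j) = Xc Wc (σ' (Wc i)) := by rw [e1]
    have hXs' : Xc Wc (σ' (Wc j)) = Xc Wc (Wc i) := by rw [← hopp]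
    by_cases hli : Hc i ≤ (Xc Wc (Wc i) + Xc Wc (σ' (Wc i))) / 2 <;>
      by_cases hlj : Hc j ≤ (Xc Wc (Wc i) + Xc Wc (σ' (Wc i))) / 2
    · -- both low : opposite orientation, fine
      simp only [outf, mth, hXs, hXs', ← e1, hσ]
      rw [if_neg hi, if_neg (show ¬ (Wc i = σ' (Wc i)) from fun e => hi e.symm)]
      simp only [hli, (by omega : Hc j ≤ (Xc Wc (σ' (Wc i)) + Xc Wc (Wc i)) / 2), ↓reduceIte]
      cases b
      · simp only [Bool.false_eq_true, if_false]
        exact fun e => hi e.symm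
      · simp only [if_true]
        exact hi
    · -- i low, j high : impossible (same orientation)
      exfalso
      simp only [nH, mth, hXs, hXs'] at hnH
      simp only [hli, (by omega : ¬ Hc j ≤ (Xc Wc (σ' (Wc i)) + Xc Wc (Wc i)) / 2), ↓reduceIte] at hnH
      rw [hXs] at hIj2
      split_ifs at hnH <;> omega
    · -- i high, j low : impossible
      exfalso
      simp only [nH, mth, hXs, hXs'] at hnH
      simp only [hli, (by omega : Hc j ≤ (Xc Wc (σ' (Wc i)) + Xc Wc (Wc i)) / 2), ↓reduceIte] at hnH
      rw [hXs] at hIj2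
      omega
    · -- both high : impossible
      exfalso
      rw [hXs] at hIj2
      omega


lemma nH_unmatched {i : T} (hi : σ' (Wc i) = Wc i) : nH σ' Wc Hc i = Hc i := by
  unfold nH mth
  rw [hi]
  split <;> omega

lemma outf_unmatched {i : T} (hi : σ' (Wc i) = Wc i) (b : Bool) :
    outf σ' Wc Hc i b = Wc i := by
  unfold outf
  rw [if_pos hi]

lemma min_out (hσ : ∀ u, σ' (σ' u) = u) {i : T} (b : Bool) :
    min (Wc i) (σ' (Wc i)) = min (outf σ' Wc Hc i b) (σ' (outf σ' Wc Hc i b)) := by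
  rcases out_mem (σ' := σ') (Wc := Wc) (Hc := Hc) i b with hm | hm
  · rw [hm]
  · rw [hm, hσ, min_comm]

lemma matched_symm (hσ : ∀ u, σ' (σ' u) = u) {p : Fin n} (hp : σ' p ≠ p) :
    σ' (σ' p) ≠ σ' p := by
  rw [hσ]
  exact fun e => hp e.symm

lemma two_tokens (hσ : ∀ u, σ' (σ' u) = u) (hI : Invd Wc Hc) {p : Fin n}
    (hp : σ' p ≠ p) (hheavy : Xc Wc (σ' p) ≤ Xc Wc p) {hh : ℕ} (h1 : 1 ≤ hh)
    (h2 : hh ≤ (Xc Wc p + Xc Wc (σ' p)) / 2) :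
    ∃ j₁ j₂, j₁ ≠ j₂ ∧ σ' (Wc j₁) ≠ Wc j₁ ∧ σ' (Wc j₂) ≠ Wc j₂ ∧
      (Wc j₁ = p ∨ Wc j₁ = σ' p) ∧
      keyf σ' Wc Hc j₁ = keyf σ' Wc Hc j₂ ∧
      nH σ' Wc Hc j₁ = hh ∧ nH σ' Wc Hc j₂ = hh := by
  by_cases hcase : hh ≤ Xc Wc (σ' p)
  · -- two low tokens, one on each endpoint
    obtain ⟨j₁, hj₁W, hj₁H⟩ := surj hI p hh h1 (by omega)
    obtain ⟨j₂, hj₂W, hj₂H⟩ := surj hI (σ' p) hh h1 hcase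
    have hm₁ : σ' (Wc j₁) ≠ Wc j₁ := by rw [hj₁W]; exact hp
    have hm₂ : σ' (Wc j₂) ≠ Wc j₂ := by rw [hj₂W]; exact matched_symm hσ hp
    have hlow₁ : Hc j₁ ≤ mth σ' Wc j₁ := by
      unfold mth; rw [hj₁W, hj₁H]; omega
    have hlow₂ : Hc j₂ ≤ mth σ' Wc j₂ := by
      unfold mth; rw [hj₂W, hj₂H, hσ]; omega
    refine ⟨j₁, j₂, ?_, hm₁, hm₂, Or.inl hj₁W, ?_, ?_, ?_⟩
    · intro e; rw [e, hj₂W] at hj₁W; exact hp hj₁W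
    · unfold keyf nH
      rw [if_pos hlow₁, if_pos hlow₂, hj₁W, hj₂W, hσ, hj₁H, hj₂H, min_comm p (σ' p)]
    · unfold nH; rw [if_pos hlow₁, hj₁H]
    · unfold nH; rw [if_pos hlow₂, hj₂H]
  · -- a low and a high token, both on the heavy endpoint p
    have hd : Xc Wc (σ' p) < hh := by omega
    obtain ⟨j₁, hj₁W, hj₁H⟩ := surj hI p hh h1 (by omega)
    obtain ⟨j₂, hj₂W, hj₂H⟩ := surj hI p (hh + (Xc Wc p - Xc Wc (σ' p)) / 2)
      (by omega) (by omega)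
    have hm₁ : σ' (Wc j₁) ≠ Wc j₁ := by rw [hj₁W]; exact hp
    have hm₂ : σ' (Wc j₂) ≠ Wc j₂ := by rw [hj₂W]; exact hp
    have hlow₁ : Hc j₁ ≤ mth σ' Wc j₁ := by
      unfold mth; rw [hj₁W, hj₁H]; omega
    have hlow₂ : ¬ Hc j₂ ≤ mth σ' Wc j₂ := by
      unfold mth; rw [hj₂W, hj₂H]; omega
    have hnH₂ : nH σ' Wc Hc j₂ = hh := by
      unfold nH; rw [if_neg hlow₂, hj₂W, hj₂H]; omega
    refine ⟨j₁, j₂, ?_, hm₁, hm₂, Or.inl hj₁W, ?_, ?_, hnH₂⟩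
    · intro e; rw [e, hj₂H] at hj₁H; omega
    · unfold keyf
      rw [hj₁W, hj₂W, hnH₂]
      unfold nH
      rw [if_pos hlow₁, hj₁H]
    · unfold nH; rw [if_pos hlow₁, hj₁H]

lemma pair_cover (hσ : ∀ u, σ' (σ' u) = u) (hI : Invd Wc Hc) {p : Fin n}
    (hp : σ' p ≠ p) {hh : ℕ} (h1 : 1 ≤ hh)
    (h2 : hh ≤ (Xc Wc p + Xc Wc (σ' p)) / 2) (c : Fin n × ℕ → Bool) :
    ∃ j, outf σ' Wc Hc j (c (keyf σ' Wc Hc j)) = p ∧ nH σ' Wc Hc j = hh := by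
  have main : ∀ q : Fin n, σ' q ≠ q → Xc Wc (σ' q) ≤ Xc Wc q →
      hh ≤ (Xc Wc q + Xc Wc (σ' q)) / 2 → (q = p ∨ σ' q = p) →
      ∃ j, outf σ' Wc Hc j (c (keyf σ' Wc Hc j)) = p ∧ nH σ' Wc Hc j = hh := by
    intro q hq hqh hq2 hqp
    obtain ⟨j₁, j₂, hne, hm₁, hm₂, hW₁, hkey, hH₁, hH₂⟩ :=
      two_tokens hσ hI hq hqh h1 hq2
    have hb : c (keyf σ' Wc Hc j₁) = c (keyf σ' Wc Hc j₂) := by rw [hkey]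
    have hout := out_ne hσ hI hne hm₁ hm₂ hkey (c (keyf σ' Wc Hc j₁))
    rw [hb] at hout
    -- both outcomes lie in {q, σ' q}
    have hmem : ∀ (j : T), (Wc j = q ∨ Wc j = σ' q) → ∀ b,
        outf σ' Wc Hc j b = q ∨ outf σ' Wc Hc j b = σ' q := by
      intro j hj b
      rcases out_mem (σ' := σ') (Wc := Wc) (Hc := Hc) j b with hm | hm <;>
        rcases hj with hj | hj
      · exact Or.inl (hm.trans hj)
      · exact Or.inr (hm.trans hj)
      · rw [hm, hj]; exact Or.inr rfl
      · rw [hm, hj, hσ]; exact Or.inl rfl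
    have hW₂ : Wc j₂ = q ∨ Wc j₂ = σ' q := by
      have hmin : min (Wc j₁) (σ' (Wc j₁)) = min (Wc j₂) (σ' (Wc j₂)) :=
        congrArg Prod.fst hkey
      rcases edge_of_min_eq hσ hmin with hs | hs <;> rcases hW₁ with hW | hW
      · exact Or.inl (hs ▸ hW)
      · exact Or.inr (hs ▸ hW)
      · have hs' : σ' (Wc j₁) = Wc j₂ := by
          have := congrArg σ' hs; rwa [hσ] at this
        right; rw [← hs', hW]
      · left; rw [← hσ q, ← hW, hs, hσ]
    rcases hmem j₁ hW₁ (c (keyf σ' Wc Hc j₁)) with ho | ho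
    · rcases hqp with hqp | hqp
      · exact ⟨j₁, by rw [ho, hqp], hH₁⟩
      · -- q = σ' p... σ' q = p; outcome j₁ = q ≠ p : use j₂
        rcases hmem j₂ hW₂ (c (keyf σ' Wc Hc j₂)) with ho₂ | ho₂
        · exfalso; apply hout; rw [hb] at ho; rw [ho, ho₂]
        · exact ⟨j₂, by rw [ho₂, hqp], hH₂⟩
    · rcases hqp with hqp | hqp
      · rcases hmem j₂ hW₂ (c (keyf σ' Wc Hc j₂)) with ho₂ | ho₂
        · exact ⟨j₂, by rw [ho₂, hqp], hH₂⟩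
        · exfalso; apply hout; rw [hb] at ho; rw [ho, ho₂]
      · exact ⟨j₁, by rw [ho, hqp], hH₁⟩
  rcases le_total (Xc Wc (σ' p)) (Xc Wc p) with hle | hle
  · exact main p hp hle h2 (Or.inl rfl)
  · refine main (σ' p) (matched_symm hσ hp) ?_ ?_ (Or.inr (hσ p))
    · rw [hσ]; exact hle
    · rw [hσ]; omega


lemma invd_step (hσ : ∀ u, σ' (σ' u) = u) (hI : Invd Wc Hc) (c : Fin n × ℕ → Bool) :
    Invd (fun i => outf σ' Wc Hc i (c (keyf σ' Wc Hc i))) (fun i => nH σ' Wc Hc i) := by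
  constructor
  · -- injectivity of heights on each node
    intro i j hij hWeq hHeq
    simp only at hWeq hHeq
    by_cases hmi : σ' (Wc i) = Wc i <;> by_cases hmj : σ' (Wc j) = Wc j
    · rw [outf_unmatched hmi, outf_unmatched hmj] at hWeq
      rw [nH_unmatched hmi, nH_unmatched hmj] at hHeq
      exact hI.1 i j hij hWeq hHeq
    · rw [outf_unmatched hmi] at hWeq
      rcases out_mem (σ' := σ') (Wc := Wc) (Hc := Hc) j (c (keyf σ' Wc Hc j)) with hm | hm
      · rw [hm] at hWeq
        rw [hWeq] at hmi
        exact hmj hmi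
      · rw [hm] at hWeq
        have h' := hmi
        rw [hWeq, hσ] at h'
        exact hmj h'.symm
    · rw [outf_unmatched hmj] at hWeq
      rcases out_mem (σ' := σ') (Wc := Wc) (Hc := Hc) i (c (keyf σ' Wc Hc i)) with hm | hm
      · rw [hm] at hWeq
        rw [← hWeq] at hmj
        exact hmi hmj
      · rw [hm] at hWeq
        have h' := hmj
        rw [← hWeq, hσ] at h'
        exact hmi h'.symm
    · -- both matched
      have hkey : keyf σ' Wc Hc i = keyf σ' Wc Hc j := by
        have h1 := min_out (Wc := Wc) (Hc := Hc) hσ (i := i) (c (keyf σ' Wc Hc i))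
        have h2 := min_out (Wc := Wc) (Hc := Hc) hσ (i := j) (c (keyf σ' Wc Hc j))
        rw [hWeq] at h1
        unfold keyf
        rw [h1, h2, hHeq]
      exact out_ne hσ hI hij hmi hmj hkey (c (keyf σ' Wc Hc i))
        (by rw [hkey] at hWeq ⊢; exact hWeq)
  · -- height bounds
    intro i
    refine ⟨nH_pos hI i, ?_⟩
    simp only
    set Wn : T → Fin n := fun j => outf σ' Wc Hc j (c (keyf σ' Wc Hc j)) with hWn
    set p := Wn i with hp
    set k := nH σ' Wc Hc i with hk
    have hk1 : 1 ≤ k := nH_pos hI i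
    have hex : ∀ hh, 1 ≤ hh → hh ≤ k → ∃ j, Wn j = p ∧ nH σ' Wc Hc j = hh := by
      intro hh hh1 hh2
      rcases eq_or_lt_of_le hh2 with hcase | hcase
      · exact ⟨i, rfl, by omega⟩
      · by_cases hmi : σ' (Wc i) = Wc i
        · -- unmatched node
          have hpW : p = Wc i := by rw [hp, hWn]; exact outf_unmatched hmi _
          have hkH : k = Hc i := by rw [hk]; exact nH_unmatched hmi
          obtain ⟨j, hjW, hjH⟩ := surj hI (Wc i) hh hh1
            (by rw [hkH] at hcase; have := (hI.2 i).2; omega)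
          have hmj : σ' (Wc j) = Wc j := by rw [hjW]; exact hmi
          refine ⟨j, ?_, ?_⟩
          · rw [hWn]; simp only
            rw [outf_unmatched hmj _, hjW, hpW]
          · rw [nH_unmatched hmj, hjH]
        · -- matched node
          have hpm : p = Wc i ∨ p = σ' (Wc i) := out_mem i _
          have hσp : σ' p ≠ p := by
            rcases hpm with hm | hm
            · rw [hm]; exact hmi
            · rw [hm]; exact matched_symm hσ hmi
          have hXsum : Xc Wc p + Xc Wc (σ' p) = Xc Wc (Wc i) + Xc Wc (σ' (Wc i)) := by
            rcases hpm with hm | hm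
            · rw [hm]
            · rw [hm, hσ]; omega
          have hkb : k ≤ (Xc Wc (Wc i) + Xc Wc (σ' (Wc i))) / 2 + 1 := by
            rw [hk]
            unfold nH mth
            have := (hI.2 i).2
            split <;> omega
          obtain ⟨j, hjo, hjH⟩ := pair_cover hσ hI hσp hh1
            (by omega) c
          exact ⟨j, hjo, hjH⟩
    have hnT : Nonempty T := ⟨i⟩
    have hex' : ∀ hh : ℕ, ∃ j, 1 ≤ hh → hh ≤ k → Wn j = p ∧ nH σ' Wc Hc j = hh := by
      intro hh
      by_cases hb : 1 ≤ hh ∧ hh ≤ k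
      · obtain ⟨j, hj⟩ := hex hh hb.1 hb.2
        exact ⟨j, fun _ _ => hj⟩
      · exact ⟨i, fun p1 p2 => absurd ⟨p1, p2⟩ hb⟩
    choose φ hφ using hex'
    have hcard : (Finset.Icc 1 k).card ≤ (Finset.univ.filter fun j => Wn j = p).card := by
      apply Finset.card_le_card_of_injOn φ
      · intro hh hmem
        simp only [Finset.mem_coe, Finset.mem_Icc] at hmem
        simp only [Finset.mem_coe, Finset.mem_filter, Finset.mem_univ, true_and]
        exact (hφ hh hmem.1 hmem.2).1
      · intro a ha b hb hab
        simp only [Finset.coe_Icc, Set.mem_Icc] at ha hb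
        have h1 := (hφ a ha.1 ha.2).2
        have h2 := (hφ b hb.1 hb.2).2
        rw [hab] at h1
        rw [h1] at h2
        exact h2
    have h2 : k ≤ Xc Wn p := by
      have hXp : Xc Wn p = (Finset.univ.filter fun j => Wn j = p).card := rfl
      rw [hXp, Nat.card_Icc] at *
      omega
    rw [hk, hp, hWn] at h2
    exact h2


lemma node_of_key (hσ : ∀ u, σ' (σ' u) = u) {i : T} {q : Fin n × ℕ}
    (hk : keyf σ' Wc Hc i = q) :
    (Wc i = q.1 ∧ σ' (Wc i) = σ' q.1) ∨ (Wc i = σ' q.1 ∧ σ' (Wc i) = q.1) := by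
  have hmin : min (Wc i) (σ' (Wc i)) = q.1 := congrArg Prod.fst hk
  rcases min_cases (Wc i) (σ' (Wc i)) with ⟨hm, -⟩ | ⟨hm, -⟩ <;> rw [hm] at hmin
  · exact Or.inl ⟨hmin, by rw [hmin]⟩
  · refine Or.inr ⟨?_, hmin⟩
    rw [← hmin, hσ]

lemma out_mem_pair (hσ : ∀ u, σ' (σ' u) = u) {i : T} {q : Fin n × ℕ}
    (hk : keyf σ' Wc Hc i = q) (b : Bool) :
    outf σ' Wc Hc i b = q.1 ∨ outf σ' Wc Hc i b = σ' q.1 := by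
  rcases out_mem (σ' := σ') (Wc := Wc) (Hc := Hc) i b with hm | hm <;>
    rcases node_of_key hσ hk with ⟨h1, h2⟩ | ⟨h1, h2⟩
  · exact Or.inl (hm.trans h1)
  · exact Or.inr (hm.trans h1)
  · exact Or.inr (hm.trans h2)
  · exact Or.inl (hm.trans h2)

lemma avg_of_key (hσ : ∀ u, σ' (σ' u) = u) {i : T} {q : Fin n × ℕ}
    (hk : keyf σ' Wc Hc i = q) (f : Fin n → ℝ) :
    f (Wc i) + f (σ' (Wc i)) = f q.1 + f (σ' q.1) := by
  rcases node_of_key hσ hk with ⟨h1, h2⟩ | ⟨h1, h2⟩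
  · rw [h2, h1]
  · rw [h2, h1]; ring

lemma per_key (hσ : ∀ u, σ' (σ' u) = u) (hI : Invd Wc Hc)
    (f : Fin n → ℝ) (hf : ∀ u, 0 ≤ f u) (B₁ : Finset T)
    (hB₁ : ∀ i ∈ B₁, σ' (Wc i) ≠ Wc i) (q : Fin n × ℕ) :
    (∏ i ∈ B₁.filter (fun i => keyf σ' Wc Hc i = q), f (outf σ' Wc Hc i true)) +
      (∏ i ∈ B₁.filter (fun i => keyf σ' Wc Hc i = q), f (outf σ' Wc Hc i false)) ≤
    2 * ∏ i ∈ B₁.filter (fun i => keyf σ' Wc Hc i = q),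
        ((f (Wc i) + f (σ' (Wc i))) / 2) := by
  set s := B₁.filter (fun i => keyf σ' Wc Hc i = q) with hs
  have hmem : ∀ i ∈ s, σ' (Wc i) ≠ Wc i ∧ keyf σ' Wc Hc i = q := by
    intro i hi
    have := Finset.mem_filter.mp hi
    exact ⟨hB₁ i this.1, this.2⟩
  have hcard : s.card ≤ 2 := by
    have : s.card ≤ ({q.1, σ' q.1} : Finset (Fin n)).card := by
      apply Finset.card_le_card_of_injOn (fun i => outf σ' Wc Hc i true)
      · intro i hi
        rcases out_mem_pair hσ (hmem i hi).2 true with hm | hm <;>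
          simp [hm]
      · intro a ha b hb hab
        by_contra hne
        exact out_ne hσ hI hne (hmem a ha).1 (hmem b hb).1
          ((hmem a ha).2.trans (hmem b hb).2.symm) true hab
    have h2 : ({q.1, σ' q.1} : Finset (Fin n)).card ≤ 2 := by
      apply le_trans (Finset.card_insert_le _ _)
      simp
    omega
  by_cases h0 : s.card = 0
  · rw [Finset.card_eq_zero.mp h0]
    simp
    norm_num
  by_cases h1 : s.card = 1
  · obtain ⟨i, hsi⟩ := Finset.card_eq_one.mp h1
    have hi : i ∈ s := by rw [hsi]; exact Finset.mem_singleton_self i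
    obtain ⟨hmi, hki⟩ := hmem i hi
    rw [hsi]
    simp only [Finset.prod_singleton]
    unfold outf
    rw [if_neg hmi, if_neg hmi]
    split
    · simp only [if_true, Bool.false_eq_true, if_false]
      linarith
    · simp only [if_true, Bool.false_eq_true, if_false]
      linarith
  · have h2 : s.card = 2 := by omega
    obtain ⟨i, j, hij, hsij⟩ := Finset.card_eq_two.mp h2
    obtain ⟨hmi, hki⟩ := hmem i (by rw [hsij]; simp)
    obtain ⟨hmj, hkj⟩ := hmem j (by rw [hsij]; simp)
    have hkey : keyf σ' Wc Hc i = keyf σ' Wc Hc j := hki.trans hkj.symm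
    have hqne : σ' q.1 ≠ q.1 := by
      rcases node_of_key hσ hki with ⟨ha, hb⟩ | ⟨ha, hb⟩
      · rw [← hb, ← ha]; exact hmi
      · rw [← ha, ← hb]; exact fun e => hmi e.symm
    have hprod : ∀ b, f (outf σ' Wc Hc i b) * f (outf σ' Wc Hc j b)
        = f q.1 * f (σ' q.1) := by
      intro b
      have hne := out_ne hσ hI hij hmi hmj hkey b
      rcases out_mem_pair hσ hki b with hoi | hoi <;>
        rcases out_mem_pair hσ hkj b with hoj | hoj
      · exfalso; apply hne; rw [hoi, hoj]
      · rw [hoi, hoj]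
      · rw [hoi, hoj]; ring
      · exfalso; apply hne; rw [hoi, hoj]
    rw [hsij]
    rw [Finset.prod_pair hij, Finset.prod_pair hij, Finset.prod_pair hij]
    rw [hprod true, hprod false]
    have havgi := avg_of_key hσ hki f
    have havgj := avg_of_key hσ hkj f
    rw [havgi, havgj]
    nlinarith [sq_nonneg (f q.1 - f (σ' q.1)), hf q.1, hf (σ' q.1)]


lemma core_sum (hσ : ∀ u, σ' (σ' u) = u) (hI : Invd Wc Hc)
    (f : Fin n → ℝ) (hf : ∀ u, 0 ≤ f u) (B : Finset T)
    (K : Finset (Fin n × ℕ)) (hK : ∀ i ∈ B, σ' (Wc i) ≠ Wc i → keyf σ' Wc Hc i ∈ K) :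
    ∑ G ∈ K.powerset, ∏ i ∈ B, f (outf σ' Wc Hc i (decide (keyf σ' Wc Hc i ∈ G))) ≤
      2 ^ K.card * ∏ i ∈ B, (if σ' (Wc i) = Wc i then f (Wc i)
        else (f (Wc i) + f (σ' (Wc i))) / 2) := by
  classical
  set B₀ := B.filter (fun i => σ' (Wc i) = Wc i) with hB₀def
  set B₁ := B.filter (fun i => ¬ σ' (Wc i) = Wc i) with hB₁def
  have hB₁m : ∀ i ∈ B₁, σ' (Wc i) ≠ Wc i := fun i hi => (Finset.mem_filter.mp hi).2
  have hB₁K : ∀ i ∈ B₁, keyf σ' Wc Hc i ∈ K := by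
    intro i hi
    have h := Finset.mem_filter.mp hi
    exact hK i h.1 h.2
  set C0 : ℝ := ∏ i ∈ B₀, f (Wc i) with hC0def
  have hC0nn : 0 ≤ C0 := Finset.prod_nonneg (fun i _ => hf _)
  set g : T → ℝ := fun i => (f (Wc i) + f (σ' (Wc i))) / 2 with hgdef
  set ψ : Fin n × ℕ → Bool → ℝ := fun q b =>
    ∏ i ∈ B₁.filter (fun i => keyf σ' Wc Hc i = q), f (outf σ' Wc Hc i b) with hψdef
  -- rewrite each summand
  have hsummand : ∀ G ∈ K.powerset,
      ∏ i ∈ B, f (outf σ' Wc Hc i (decide (keyf σ' Wc Hc i ∈ G))) =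
      C0 * ((∏ q ∈ G, ψ q true) * ∏ q ∈ K \ G, ψ q false) := by
    intro G hG
    have hGsub : G ⊆ K := Finset.mem_powerset.mp hG
    rw [← Finset.prod_filter_mul_prod_filter_not B (fun i => σ' (Wc i) = Wc i)]
    congr 1
    · -- unmatched part
      rw [hC0def]
      apply Finset.prod_congr rfl
      intro i hi
      rw [outf_unmatched (Finset.mem_filter.mp hi).2]
    · -- matched part
      have hfib := Finset.prod_fiberwise_of_maps_to hB₁K
        (fun i => f (outf σ' Wc Hc i (decide (keyf σ' Wc Hc i ∈ G))))
      rw [← hfib]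
      have hq : ∀ q ∈ K, (∏ i ∈ B₁.filter (fun i => keyf σ' Wc Hc i = q),
          f (outf σ' Wc Hc i (decide (keyf σ' Wc Hc i ∈ G)))) = ψ q (decide (q ∈ G)) := by
        intro q hqK
        apply Finset.prod_congr rfl
        intro i hi
        rw [(Finset.mem_filter.mp hi).2]
      rw [Finset.prod_congr rfl hq]
      rw [← Finset.prod_filter_mul_prod_filter_not K (fun q => q ∈ G)]
      have e1 : K.filter (fun q => q ∈ G) = G := by
        rw [Finset.filter_mem_eq_inter, Finset.inter_eq_right.mpr hGsub]
      have e2 : K.filter (fun q => ¬ q ∈ G) = K \ G := (Finset.sdiff_eq_filter K G).symm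
      rw [e1, e2]
      congr 1
      · apply Finset.prod_congr rfl
        intro q hq'
        rw [decide_eq_true hq']
      · apply Finset.prod_congr rfl
        intro q hq'
        rw [decide_eq_false (Finset.mem_sdiff.mp hq').2]
  rw [Finset.sum_congr rfl hsummand, ← Finset.mul_sum, ← Finset.prod_add]
  -- bound the product over keys
  have hbound : ∏ q ∈ K, (ψ q true + ψ q false) ≤ ∏ q ∈ K, (2 * ∏ i ∈
      B₁.filter (fun i => keyf σ' Wc Hc i = q), g i) := by
    apply Finset.prod_le_prod
    · intro q _
      have : (0:ℝ) ≤ ψ q true := Finset.prod_nonneg (fun i _ => hf _)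
      have : (0:ℝ) ≤ ψ q false := Finset.prod_nonneg (fun i _ => hf _)
      positivity
    · intro q _
      exact per_key hσ hI f hf B₁ hB₁m q
  have hfin : C0 * ∏ q ∈ K, (ψ q true + ψ q false) ≤
      C0 * ∏ q ∈ K, (2 * ∏ i ∈ B₁.filter (fun i => keyf σ' Wc Hc i = q), g i) :=
    mul_le_mul_of_nonneg_left hbound hC0nn
  apply le_trans hfin
  rw [Finset.prod_mul_distrib, Finset.prod_const]
  rw [Finset.prod_fiberwise_of_maps_to hB₁K g]
  -- now RHS bookkeeping
  rw [← Finset.prod_filter_mul_prod_filter_not B (fun i => σ' (Wc i) = Wc i)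
    (fun i => if σ' (Wc i) = Wc i then f (Wc i) else (f (Wc i) + f (σ' (Wc i))) / 2)]
  have e3 : (∏ i ∈ B₀, if σ' (Wc i) = Wc i then f (Wc i)
      else (f (Wc i) + f (σ' (Wc i))) / 2) = C0 := by
    rw [hC0def]
    apply Finset.prod_congr rfl
    intro i hi
    rw [if_pos (Finset.mem_filter.mp hi).2]
  have e4 : (∏ i ∈ B₁, if σ' (Wc i) = Wc i then f (Wc i)
      else (f (Wc i) + f (σ' (Wc i))) / 2) = ∏ i ∈ B₁, g i := by
    apply Finset.prod_congr rfl
    intro i hi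
    rw [if_neg (Finset.mem_filter.mp hi).2]
  rw [e3, e4]
  apply le_of_eq
  ring


/-! ### Matrix products -/

def Rmat (M : ℕ → Matrix (Fin n) (Fin n) ℝ) (t₂ t : ℕ) : Matrix (Fin n) (Fin n) ℝ :=
  ((List.range (t₂ - t)).map (fun k => M (t + 1 + k))).prod

lemma Rmat_last (M : ℕ → Matrix (Fin n) (Fin n) ℝ) (t₂ : ℕ) : Rmat M t₂ t₂ = 1 := by
  simp [Rmat]

lemma Rmat_succ (M : ℕ → Matrix (Fin n) (Fin n) ℝ) {t₂ t : ℕ} (h : t < t₂) :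
    Rmat M t₂ t = M (t + 1) * Rmat M t₂ (t + 1) := by
  have h1 : t₂ - t = (t₂ - (t + 1)) + 1 := by omega
  unfold Rmat
  rw [h1, List.range_succ_eq_map, List.map_cons, List.prod_cons, List.map_map]
  have hfun : List.map ((fun k => M (t + 1 + k)) ∘ Nat.succ) (List.range (t₂ - (t + 1))) =
      List.map (fun k => M (t + 1 + 1 + k)) (List.range (t₂ - (t + 1))) := by
    apply List.map_congr_left
    intro k _
    show M (t + 1 + (k + 1)) = M (t + 1 + 1 + k)
    exact congrArg M (by omega)
  rw [hfun]

lemma list_prod_nonneg : ∀ (L : List (Matrix (Fin n) (Fin n) ℝ)),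
    (∀ A ∈ L, ∀ a b, 0 ≤ A a b) → ∀ a b, 0 ≤ L.prod a b := by
  intro L
  induction L with
  | nil =>
    intro _ a b
    simp only [List.prod_nil, Matrix.one_apply]
    split <;> norm_num
  | cons A L ih =>
    intro hL a b
    rw [List.prod_cons, Matrix.mul_apply]
    apply Finset.sum_nonneg
    intro c _
    exact mul_nonneg (hL A (by simp) a c)
      (ih (fun A' hA' => hL A' (by simp [hA'])) c b)

lemma Rmat_nonneg {σ : ℕ → Fin n → Fin n} {M : ℕ → Matrix (Fin n) (Fin n) ℝ}
    (hM : ∀ s a b, M s a b =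
      if σ s a = a then (if b = a then (1 : ℝ) else 0)
      else (if b = a ∨ b = σ s a then 1 / 2 else 0))
    (t₂ t : ℕ) (a b : Fin n) : 0 ≤ Rmat M t₂ t a b := by
  apply list_prod_nonneg
  intro A hA a' b'
  simp only [List.mem_map] at hA
  obtain ⟨k, -, rfl⟩ := hA
  rw [hM]
  split <;> split <;> norm_num

lemma Q_eq_Rmat {M Q : ℕ → Matrix (Fin n) (Fin n) ℝ}
    {t₁ t₂ : ℕ} (hlt : t₁ ≤ t₂) (hQ0 : Q t₁ = 1)
    (hQs : ∀ s, t₁ ≤ s → s < t₂ → Q (s + 1) = Q s * M (s + 1)) :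
    Q t₂ = Rmat M t₂ t₁ := by
  have key : ∀ j, j ≤ t₂ - t₁ → Q (t₂ - j) * Rmat M t₂ (t₂ - j) = Q t₂ := by
    intro j
    induction j with
    | zero => intro _; simp [Rmat_last]
    | succ j ih =>
      intro hj
      have h2 : t₂ - (j + 1) < t₂ := by omega
      rw [Rmat_succ M h2, ← Matrix.mul_assoc, ← hQs (t₂ - (j + 1)) (by omega) h2]
      have e : t₂ - (j + 1) + 1 = t₂ - j := by omega
      rw [e]
      exact ih (by omega)
  have := key (t₂ - t₁) (le_refl _)
  rw [show t₂ - (t₂ - t₁) = t₁ by omega, hQ0, Matrix.one_mul] at this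
  exact this.symm

lemma RD_succ {σ : ℕ → Fin n → Fin n} {M : ℕ → Matrix (Fin n) (Fin n) ℝ}
    (hM : ∀ s a b, M s a b =
      if σ s a = a then (if b = a then (1 : ℝ) else 0)
      else (if b = a ∨ b = σ s a then 1 / 2 else 0))
    {t₂ t : ℕ} (h : t < t₂) (u : Fin n) (D : Finset (Fin n)) :
    ∑ v ∈ D, Rmat M t₂ t u v =
      if σ (t + 1) u = u then ∑ v ∈ D, Rmat M t₂ (t + 1) u v
      else (∑ v ∈ D, Rmat M t₂ (t + 1) u v
            + ∑ v ∈ D, Rmat M t₂ (t + 1) (σ (t + 1) u) v) / 2 := by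
  have e1 : ∑ v ∈ D, Rmat M t₂ t u v =
      ∑ b : Fin n, M (t + 1) u b * ∑ v ∈ D, Rmat M t₂ (t + 1) b v := by
    rw [Rmat_succ M h]
    simp only [Matrix.mul_apply]
    rw [Finset.sum_comm]
    apply Finset.sum_congr rfl
    intro b _
    rw [Finset.mul_sum]
  rw [e1]
  by_cases hu : σ (t + 1) u = u
  · rw [if_pos hu]
    have : ∀ b : Fin n, M (t + 1) u b * ∑ v ∈ D, Rmat M t₂ (t + 1) b v =
        if b = u then ∑ v ∈ D, Rmat M t₂ (t + 1) b v else 0 := by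
      intro b
      rw [hM, if_pos hu]
      split <;> simp
    rw [Finset.sum_congr rfl (fun b _ => this b)]
    simp
  · rw [if_neg hu]
    have : ∀ b : Fin n, M (t + 1) u b * ∑ v ∈ D, Rmat M t₂ (t + 1) b v =
        (if b = u then (∑ v ∈ D, Rmat M t₂ (t + 1) b v) / 2 else 0)
          + (if b = σ (t + 1) u then (∑ v ∈ D, Rmat M t₂ (t + 1) b v) / 2 else 0) := by
      intro b
      rw [hM, if_neg hu]
      by_cases h1 : b = u
      · rw [if_pos (Or.inl h1), if_pos h1,
          if_neg (show ¬ b = σ (t + 1) u by rw [h1]; exact fun e => hu e.symm)]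
        ring
      · by_cases h2 : b = σ (t + 1) u
        · rw [if_pos (Or.inr h2), if_neg h1, if_pos h2]
          ring
        · rw [if_neg (by tauto), if_neg h1, if_neg h2]
          ring
    rw [Finset.sum_congr rfl (fun b _ => this b), Finset.sum_add_distrib]
    simp only [Finset.sum_ite_eq', Finset.mem_univ, if_true]
    ring


/-! ### Bridge between the abstract process and the deterministic one-round functions -/

section Bridge

variable {n : ℕ} {Ω : Type*} {T : Type*} [Fintype T] [DecidableEq T]
  {flip : ℕ → Fin n → ℕ → Ω → Bool}
  {σ : ℕ → Fin n → Fin n}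
  {W : ℕ → T → Ω → Fin n} {H : ℕ → T → Ω → ℕ}
  {X : ℕ → Fin n → Ω → ℕ}

lemma step_eq
    (hX : ∀ t u ω, X t u ω = (Finset.univ.filter (fun j => W t j ω = u)).card)
    (hstep_unmatched : ∀ t i ω, σ (t + 1) (W t i ω) = W t i ω →
      W (t + 1) i ω = W t i ω ∧ H (t + 1) i ω = H t i ω)
    (hstep_low : ∀ t i ω, σ (t + 1) (W t i ω) ≠ W t i ω →
      H t i ω ≤ (X t (W t i ω) ω + X t (σ (t + 1) (W t i ω)) ω) / 2 →
      H (t + 1) i ω = H t i ω ∧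
      W (t + 1) i ω =
        (if flip (t + 1) (min (W t i ω) (σ (t + 1) (W t i ω))) (H t i ω) ω
         then σ (t + 1) (W t i ω) else W t i ω))
    (hstep_high : ∀ t i ω, σ (t + 1) (W t i ω) ≠ W t i ω →
      ¬ (H t i ω ≤ (X t (W t i ω) ω + X t (σ (t + 1) (W t i ω)) ω) / 2) →
      H (t + 1) i ω = H t i ω - (X t (W t i ω) ω - X t (σ (t + 1) (W t i ω)) ω) / 2 ∧
      W (t + 1) i ω =
        (if flip (t + 1) (min (W t i ω) (σ (t + 1) (W t i ω))) (H (t + 1) i ω) ω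
         then W t i ω else σ (t + 1) (W t i ω)))
    (t : ℕ) (i : T) (ω : Ω) :
    H (t + 1) i ω = nH (σ (t + 1)) (fun j => W t j ω) (fun j => H t j ω) i ∧
    W (t + 1) i ω = outf (σ (t + 1)) (fun j => W t j ω) (fun j => H t j ω) i
      (flip (t + 1) (keyf (σ (t + 1)) (fun j => W t j ω) (fun j => H t j ω) i).1
        (keyf (σ (t + 1)) (fun j => W t j ω) (fun j => H t j ω) i).2 ω) := by
  have hXe : ∀ u, X t u ω = Xc (fun j => W t j ω) u := fun u => hX t u ω
  by_cases hm : σ (t + 1) (W t i ω) = W t i ω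
  · obtain ⟨e1, e2⟩ := hstep_unmatched t i ω hm
    constructor
    · rw [e2, nH_unmatched (σ' := σ (t + 1)) (Wc := fun j => W t j ω)
        (Hc := fun j => H t j ω) hm]
    · rw [e1, outf_unmatched (σ' := σ (t + 1)) (Wc := fun j => W t j ω)
        (Hc := fun j => H t j ω) hm]
  · by_cases hlow : H t i ω ≤ (X t (W t i ω) ω + X t (σ (t + 1) (W t i ω)) ω) / 2
    · obtain ⟨e1, e2⟩ := hstep_low t i ω hm hlow
      have hlow' : (fun j => H t j ω) i ≤ mth (σ (t + 1)) (fun j => W t j ω) i := by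
        show H t i ω ≤ _
        unfold mth
        rw [← hXe, ← hXe]
        exact hlow
      have hnHe : nH (σ (t + 1)) (fun j => W t j ω) (fun j => H t j ω) i = H t i ω :=
        if_pos hlow'
      constructor
      · rw [e1, hnHe]
      · rw [e2]
        simp only [keyf, hnHe]
        unfold outf
        rw [if_neg hm, if_pos hlow']
    · obtain ⟨e1, e2⟩ := hstep_high t i ω hm hlow
      have hlow' : ¬ ((fun j => H t j ω) i ≤ mth (σ (t + 1)) (fun j => W t j ω) i) := by
        show ¬ (H t i ω ≤ _)
        unfold mth
        rw [← hXe, ← hXe]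
        exact hlow
      have hnHe : nH (σ (t + 1)) (fun j => W t j ω) (fun j => H t j ω) i = H (t + 1) i ω := by
        rw [e1]
        unfold nH
        rw [if_neg hlow']
        show H t i ω - (Xc (fun j => W t j ω) (W t i ω)
          - Xc (fun j => W t j ω) (σ (t + 1) (W t i ω))) / 2 = _
        rw [← hXe, ← hXe]
      constructor
      · exact hnHe.symm
      · rw [e2]
        simp only [keyf, hnHe]
        unfold outf
        rw [if_neg hm, if_neg hlow']

variable {t₁ : ℕ} {w : T → Fin n} {h : T → ℕ}

lemma inv_all
    (hX : ∀ t u ω, X t u ω = (Finset.univ.filter (fun j => W t j ω = u)).card)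
    (hinv : ∀ t u, σ t (σ t u) = u)
    (hW1 : ∀ i ω, W t₁ i ω = w i) (hH1 : ∀ i ω, H t₁ i ω = h i)
    (hinj : ∀ i j, i ≠ j → w i = w j → h i ≠ h j)
    (hrange : ∀ i, 1 ≤ h i ∧ h i ≤ (Finset.univ.filter (fun j => w j = w i)).card)
    (hstep_unmatched : ∀ t i ω, σ (t + 1) (W t i ω) = W t i ω →
      W (t + 1) i ω = W t i ω ∧ H (t + 1) i ω = H t i ω)
    (hstep_low : ∀ t i ω, σ (t + 1) (W t i ω) ≠ W t i ω →
      H t i ω ≤ (X t (W t i ω) ω + X t (σ (t + 1) (W t i ω)) ω) / 2 →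
      H (t + 1) i ω = H t i ω ∧
      W (t + 1) i ω =
        (if flip (t + 1) (min (W t i ω) (σ (t + 1) (W t i ω))) (H t i ω) ω
         then σ (t + 1) (W t i ω) else W t i ω))
    (hstep_high : ∀ t i ω, σ (t + 1) (W t i ω) ≠ W t i ω →
      ¬ (H t i ω ≤ (X t (W t i ω) ω + X t (σ (t + 1) (W t i ω)) ω) / 2) →
      H (t + 1) i ω = H t i ω - (X t (W t i ω) ω - X t (σ (t + 1) (W t i ω)) ω) / 2 ∧
      W (t + 1) i ω =
        (if flip (t + 1) (min (W t i ω) (σ (t + 1) (W t i ω))) (H (t + 1) i ω) ω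
         then W t i ω else σ (t + 1) (W t i ω))) :
    ∀ t, t₁ ≤ t → ∀ ω : Ω, Invd (fun j => W t j ω) (fun j => H t j ω) := by
  intro t ht
  induction t, ht using Nat.le_induction with
  | base =>
    intro ω
    constructor
    · intro i j hij hWeq
      simp only [hW1] at hWeq
      simp only [hH1]
      exact hinj i j hij hWeq
    · intro i
      simp only [hW1, hH1]
      refine ⟨(hrange i).1, ?_⟩
      unfold Xc
      simp only [hW1]
      exact (hrange i).2
  | succ t ht IH =>
    intro ω
    have hI := IH ω
    have hstep := step_eq hX hstep_unmatched hstep_low hstep_high (σ := σ) t (ω := ω)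
    have hWeq : (fun j => W (t + 1) j ω) = fun j =>
        outf (σ (t + 1)) (fun j => W t j ω) (fun j => H t j ω) j
          ((fun q : Fin n × ℕ => flip (t + 1) q.1 q.2 ω)
            (keyf (σ (t + 1)) (fun j => W t j ω) (fun j => H t j ω) j)) :=
      funext fun j => (hstep j).2
    have hHeq : (fun j => H (t + 1) j ω) = fun j =>
        nH (σ (t + 1)) (fun j => W t j ω) (fun j => H t j ω) j :=
      funext fun j => (hstep j).1
    rw [hWeq, hHeq]
    exact invd_step (hinv (t + 1)) hI (fun q => flip (t + 1) q.1 q.2 ω)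

lemma agree
    (hX : ∀ t u ω, X t u ω = (Finset.univ.filter (fun j => W t j ω = u)).card)
    (hinv : ∀ t u, σ t (σ t u) = u)
    (hW1 : ∀ i ω, W t₁ i ω = w i) (hH1 : ∀ i ω, H t₁ i ω = h i)
    (hinj : ∀ i j, i ≠ j → w i = w j → h i ≠ h j)
    (hrange : ∀ i, 1 ≤ h i ∧ h i ≤ (Finset.univ.filter (fun j => w j = w i)).card)
    (hstep_unmatched : ∀ t i ω, σ (t + 1) (W t i ω) = W t i ω →
      W (t + 1) i ω = W t i ω ∧ H (t + 1) i ω = H t i ω)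
    (hstep_low : ∀ t i ω, σ (t + 1) (W t i ω) ≠ W t i ω →
      H t i ω ≤ (X t (W t i ω) ω + X t (σ (t + 1) (W t i ω)) ω) / 2 →
      H (t + 1) i ω = H t i ω ∧
      W (t + 1) i ω =
        (if flip (t + 1) (min (W t i ω) (σ (t + 1) (W t i ω))) (H t i ω) ω
         then σ (t + 1) (W t i ω) else W t i ω))
    (hstep_high : ∀ t i ω, σ (t + 1) (W t i ω) ≠ W t i ω →
      ¬ (H t i ω ≤ (X t (W t i ω) ω + X t (σ (t + 1) (W t i ω)) ω) / 2) →
      H (t + 1) i ω = H t i ω - (X t (W t i ω) ω - X t (σ (t + 1) (W t i ω)) ω) / 2 ∧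
      W (t + 1) i ω =
        (if flip (t + 1) (min (W t i ω) (σ (t + 1) (W t i ω))) (H (t + 1) i ω) ω
         then W t i ω else σ (t + 1) (W t i ω))) :
    ∀ t, t₁ ≤ t → ∀ ω ω' : Ω,
      (∀ s r hh, t₁ < s → s ≤ t → 1 ≤ hh → hh ≤ Fintype.card T →
        flip s r hh ω = flip s r hh ω') →
      ∀ i, W t i ω = W t i ω' ∧ H t i ω = H t i ω' := by
  intro t ht
  induction t, ht using Nat.le_induction with
  | base =>
    intro ω ω' _ i
    rw [hW1, hW1, hH1, hH1]
    exact ⟨rfl, rfl⟩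
  | succ t ht IH =>
    intro ω ω' hflip i
    have hIH := IH ω ω' (fun s r hh h1 h2 h3 h4 => hflip s r hh h1 (by omega) h3 h4)
    have hWeq : (fun j => W t j ω) = (fun j => W t j ω') := funext fun j => (hIH j).1
    have hHeq : (fun j => H t j ω) = (fun j => H t j ω') := funext fun j => (hIH j).2
    have hstepω := step_eq hX hstep_unmatched hstep_low hstep_high t i ω
    have hstepω' := step_eq hX hstep_unmatched hstep_low hstep_high t i ω'
    have hI := inv_all hX hinv hW1 hH1 hinj hrange hstep_unmatched hstep_low
      hstep_high t ht ω
    have hk1 : 1 ≤ nH (σ (t + 1)) (fun j => W t j ω) (fun j => H t j ω) i :=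
      nH_pos hI i
    have hk2 : nH (σ (t + 1)) (fun j => W t j ω) (fun j => H t j ω) i
        ≤ Fintype.card T :=
      le_trans (nH_le i) (le_trans (hI.2 i).2 (Xc_le_card _))
    have hflipkey :
        flip (t + 1) (keyf (σ (t + 1)) (fun j => W t j ω) (fun j => H t j ω) i).1
          (keyf (σ (t + 1)) (fun j => W t j ω) (fun j => H t j ω) i).2 ω
        = flip (t + 1) (keyf (σ (t + 1)) (fun j => W t j ω) (fun j => H t j ω) i).1
          (keyf (σ (t + 1)) (fun j => W t j ω) (fun j => H t j ω) i).2 ω' :=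
      hflip _ _ _ (by omega) (le_refl _) hk1 hk2
    constructor
    · rw [hstepω.2, hstepω'.2, ← hWeq, ← hHeq, hflipkey]
    · rw [hstepω.1, hstepω'.1, ← hWeq, ← hHeq]

end Bridge

end HSNA


open MeasureTheory ProbabilityTheory

/-- Negative association of token locations in the height-sensitive process. The
randomness is given by independent fair coins `flip t r h` (round `t`, edge
representative `r`, height `h`). The process: matchings are involutions `σ t`; the
configuration at round `t₁` is deterministic with locations `w i` and heights `h i`
(distinct heights per node, within range). In round `t+1`, a token on an unmatched
node keeps its location and height; on a matched edge `{u,v}`, a token whose height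
is at most `⌊(X_u+X_v)/2⌋` keeps its height and is swapped to the other endpoint
according to the coin at its height (moving step is the identity for it), while a
token with larger height (on the heavier node) first moves to the other endpoint,
decreasing its height by `⌊(X_u−X_v)/2⌋`, and is then swapped back according to the
coin at its new height. Conclusion: for any set of tokens `B` and set of nodes `D`,
`Pr[⋂_{i∈B} {W_i^{(t₂)} ∈ D}] ≤ ∏_{i∈B} (M^{(t₁+1)}···M^{(t₂)})_{w_i, D}`, where the
product matrix is `Q t₂` and `M_{u,D} = ∑_{v∈D} M_{u,v}`. -/
theorem height_sensitive_negative_association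
    (n : ℕ) (hn : 0 < n)
    {Ω : Type*} [MeasurableSpace Ω] (μ : Measure Ω) [IsProbabilityMeasure μ]
    (T : Type*) [Fintype T] [DecidableEq T]
    (flip : ℕ → Fin n → ℕ → Ω → Bool)
    (hflipmeas : ∀ t r hh, Measurable (flip t r hh))
    (hfair : ∀ t r hh, μ {ω | flip t r hh ω = true} = 1 / 2)
    (hindep : iIndepFun
      (fun (p : ℕ × Fin n × ℕ) ω => flip p.1 p.2.1 p.2.2 ω) μ)
    (σ : ℕ → Fin n → Fin n) (hinv : ∀ t u, σ t (σ t u) = u)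
    (W : ℕ → T → Ω → Fin n) (H : ℕ → T → Ω → ℕ)
    (X : ℕ → Fin n → Ω → ℕ)
    (hX : ∀ t u ω, X t u ω = (Finset.univ.filter (fun j => W t j ω = u)).card)
    (t₁ t₂ : ℕ) (hlt : t₁ < t₂)
    (w : T → Fin n) (h : T → ℕ)
    (hW1 : ∀ i ω, W t₁ i ω = w i) (hH1 : ∀ i ω, H t₁ i ω = h i)
    (hinj : ∀ i j, i ≠ j → w i = w j → h i ≠ h j)
    (hrange : ∀ i, 1 ≤ h i ∧ h i ≤ (Finset.univ.filter (fun j => w j = w i)).card)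
    (hstep_unmatched : ∀ t i ω, σ (t + 1) (W t i ω) = W t i ω →
      W (t + 1) i ω = W t i ω ∧ H (t + 1) i ω = H t i ω)
    (hstep_low : ∀ t i ω, σ (t + 1) (W t i ω) ≠ W t i ω →
      H t i ω ≤ (X t (W t i ω) ω + X t (σ (t + 1) (W t i ω)) ω) / 2 →
      H (t + 1) i ω = H t i ω ∧
      W (t + 1) i ω =
        (if flip (t + 1) (min (W t i ω) (σ (t + 1) (W t i ω))) (H t i ω) ω
         then σ (t + 1) (W t i ω) else W t i ω))
    (hstep_high : ∀ t i ω, σ (t + 1) (W t i ω) ≠ W t i ω →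
      ¬ (H t i ω ≤ (X t (W t i ω) ω + X t (σ (t + 1) (W t i ω)) ω) / 2) →
      H (t + 1) i ω = H t i ω - (X t (W t i ω) ω - X t (σ (t + 1) (W t i ω)) ω) / 2 ∧
      W (t + 1) i ω =
        (if flip (t + 1) (min (W t i ω) (σ (t + 1) (W t i ω))) (H (t + 1) i ω) ω
         then W t i ω else σ (t + 1) (W t i ω)))
    (M : ℕ → Matrix (Fin n) (Fin n) ℝ)
    (hM : ∀ s a b, M s a b =
      if σ s a = a then (if b = a then (1 : ℝ) else 0)
      else (if b = a ∨ b = σ s a then 1 / 2 else 0))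
    (Q : ℕ → Matrix (Fin n) (Fin n) ℝ)
    (hQ0 : Q t₁ = 1)
    (hQs : ∀ s, t₁ ≤ s → s < t₂ → Q (s + 1) = Q s * M (s + 1))
    (B : Finset T) (D : Finset (Fin n)) :
    μ {ω | ∀ i ∈ B, W t₂ i ω ∈ D}
      ≤ ENNReal.ofReal (∏ i ∈ B, ∑ v ∈ D, Q t₂ (w i) v) := by
  classical
  set N := Fintype.card T with hN
  have hQR : Q t₂ = HSNA.Rmat M t₂ t₁ := HSNA.Q_eq_Rmat (le_of_lt hlt) hQ0 hQs
  set RD : ℕ → Fin n → ℝ := fun t u => ∑ v ∈ D, HSNA.Rmat M t₂ t u v with hRD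
  have hRDnn : ∀ t u, 0 ≤ RD t u := fun t u =>
    Finset.sum_nonneg fun v _ => HSNA.Rmat_nonneg hM t₂ t u v
  have hRDsucc : ∀ t, t < t₂ → ∀ u : Fin n, RD t u =
      if σ (t + 1) u = u then RD (t + 1) u
      else (RD (t + 1) u + RD (t + 1) (σ (t + 1) u)) / 2 := by
    intro t h' u
    simp only [hRD]
    exact HSNA.RD_succ hM h' u D
  -- coin index sets
  set S : ℕ → Finset (ℕ × Fin n × ℕ) := fun t =>
    (Finset.Ioc t₁ t) ×ˢ ((Finset.univ : Finset (Fin n)) ×ˢ Finset.Icc 1 N) with hS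
  have hSmem : ∀ t (p : ℕ × Fin n × ℕ),
      p ∈ S t ↔ (t₁ < p.1 ∧ p.1 ≤ t ∧ 1 ≤ p.2.2 ∧ p.2.2 ≤ N) := by
    intro t p
    simp only [hS, Finset.mem_product, Finset.mem_Ioc, Finset.mem_Icc, Finset.mem_univ,
      true_and]
    tauto
  set atom : ℕ → Finset (ℕ × Fin n × ℕ) → Set Ω := fun t E =>
    {ω | ∀ p ∈ S t, flip p.1 p.2.1 p.2.2 ω = decide (p ∈ E)} with hatomdef
  have hmem_atom : ∀ t E (ω : Ω), ω ∈ atom t E ↔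
      ∀ p ∈ S t, flip p.1 p.2.1 p.2.2 ω = decide (p ∈ E) := fun _ _ _ => Iff.rfl
  -- measure of atoms
  have hflip_half : ∀ (p : ℕ × Fin n × ℕ) (b : Bool),
      μ {ω | flip p.1 p.2.1 p.2.2 ω = b} = 2⁻¹ := by
    intro p b
    have hmeas : MeasurableSet {ω | flip p.1 p.2.1 p.2.2 ω = true} :=
      (hflipmeas p.1 p.2.1 p.2.2) (measurableSet_singleton true)
    cases b
    · have he : {ω | flip p.1 p.2.1 p.2.2 ω = false}
          = {ω | flip p.1 p.2.1 p.2.2 ω = true}ᶜ := by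
        ext ω; simp
      rw [he, prob_compl_eq_one_sub hmeas, hfair]
      rw [one_div, ENNReal.one_sub_inv_two]
    · rw [hfair, one_div]
  have hatomμ : ∀ t E, μ (atom t E) = 2⁻¹ ^ (S t).card := by
    intro t E
    have he : atom t E = ⋂ p ∈ S t, {ω | flip p.1 p.2.1 p.2.2 ω = decide (p ∈ E)} := by
      ext ω
      simp only [hatomdef, Set.mem_setOf_eq, Set.mem_iInter]
    rw [he, hindep.meas_biInter (fun p _ =>
      ⟨{decide (p ∈ E)}, trivial, by ext ω; simp⟩)]
    rw [Finset.prod_congr rfl (fun p _ => hflip_half p (decide (p ∈ E))),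
      Finset.prod_const]
  have hne : ∀ t E, (atom t E).Nonempty := by
    intro t E
    apply nonempty_of_measure_ne_zero (μ := μ)
    rw [hatomμ]
    exact pow_ne_zero _ (by simp)
  set rep : ∀ _ : ℕ, Finset (ℕ × Fin n × ℕ) → Ω := fun t E => (hne t E).some with hrepdef
  have hrepmem : ∀ t E, rep t E ∈ atom t E := fun t E => (hne t E).some_mem
  -- agreement on atoms
  have hagree : ∀ t, t₁ ≤ t → ∀ E (ω ω' : Ω), ω ∈ atom t E → ω' ∈ atom t E →
      ∀ i, W t i ω = W t i ω' ∧ H t i ω = H t i ω' := by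
    intro t ht E ω ω' hω hω' i
    refine HSNA.agree hX hinv hW1 hH1 hinj hrange hstep_unmatched hstep_low hstep_high
      t ht ω ω' ?_ i
    intro s r hh h1 h2 h3 h4
    have hp : (s, r, hh) ∈ S t := (hSmem t (s, r, hh)).mpr ⟨h1, h2, h3, h4⟩
    rw [(hmem_atom t E ω).mp hω _ hp, (hmem_atom t E ω').mp hω' _ hp]
  -- invariant
  have hIall : ∀ t, t₁ ≤ t → ∀ ω : Ω,
      HSNA.Invd (fun j => W t j ω) (fun j => H t j ω) :=
    HSNA.inv_all hX hinv hW1 hH1 hinj hrange hstep_unmatched hstep_low hstep_high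
  -- the supermartingale-type quantity
  set Lam : ℕ → ENNReal := fun t => ∑ E ∈ (S t).powerset,
    2⁻¹ ^ (S t).card * ENNReal.ofReal (∏ i ∈ B, RD t (W t i (rep t E))) with hLam
  -- the target measure is at most Lam t₂
  have hRD2 : ∀ u, RD t₂ u = if u ∈ D then 1 else 0 := by
    intro u
    simp only [hRD, HSNA.Rmat_last, Matrix.one_apply]
    rw [Finset.sum_ite_eq D u (fun _ => (1:ℝ))]
  have hfinal : μ {ω | ∀ i ∈ B, W t₂ i ω ∈ D} ≤ Lam t₂ := by
    have hcover : {ω | ∀ i ∈ B, W t₂ i ω ∈ D} ⊆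
        ⋃ E ∈ (S t₂).powerset, ({ω | ∀ i ∈ B, W t₂ i ω ∈ D} ∩ atom t₂ E) := by
      intro ω hω
      refine Set.mem_biUnion (Finset.mem_powerset.mpr
        (Finset.filter_subset (fun p => flip p.1 p.2.1 p.2.2 ω = true) (S t₂))) ⟨hω, ?_⟩
      rw [hmem_atom]
      intro p hp
      by_cases hb : flip p.1 p.2.1 p.2.2 ω = true
      · simp [hb, Finset.mem_filter, hp]
      · rw [Bool.not_eq_true] at hb
        simp [hb, Finset.mem_filter]
    refine le_trans (le_trans (measure_mono hcover) (measure_biUnion_finset_le _ _)) ?_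
    rw [hLam]
    apply Finset.sum_le_sum
    intro E hE
    rcases Set.eq_empty_or_nonempty ({ω | ∀ i ∈ B, W t₂ i ω ∈ D} ∩ atom t₂ E)
      with hemp | ⟨ω', hω'⟩
    · rw [hemp]
      simp
    · have hval : ∏ i ∈ B, RD t₂ (W t₂ i (rep t₂ E)) = 1 := by
        apply Finset.prod_eq_one
        intro i hi
        rw [(hagree t₂ (le_of_lt hlt) E _ _ (hrepmem t₂ E) hω'.2 i).1, hRD2,
          if_pos (hω'.1 i hi)]
      calc μ ({ω | ∀ i ∈ B, W t₂ i ω ∈ D} ∩ atom t₂ E) ≤ μ (atom t₂ E) :=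
            measure_mono Set.inter_subset_right
        _ = 2⁻¹ ^ (S t₂).card := hatomμ t₂ E
        _ = 2⁻¹ ^ (S t₂).card * ENNReal.ofReal (∏ i ∈ B, RD t₂ (W t₂ i (rep t₂ E))) := by
            rw [hval]
            simp
  -- initial value
  have hinitial : Lam t₁ = ENNReal.ofReal (∏ i ∈ B, ∑ v ∈ D, Q t₂ (w i) v) := by
    have hSt₁ : S t₁ = ∅ := by
      rw [hS]
      simp
    rw [hLam]
    simp only [hSt₁, Finset.powerset_empty, Finset.sum_singleton, Finset.card_empty,
      pow_zero, one_mul]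
    congr 1
    apply Finset.prod_congr rfl
    intro i _
    rw [hRD, hW1, hQR]
  -- one-step inequality
  have hstepL : ∀ t, t₁ ≤ t → t < t₂ → Lam (t + 1) ≤ Lam t := by
    intro t ht ht2
    set K : Finset (Fin n × ℕ) := (Finset.univ : Finset (Fin n)) ×ˢ Finset.Icc 1 N
      with hK
    have hKmemiff : ∀ q : Fin n × ℕ, q ∈ K ↔ 1 ≤ q.2 ∧ q.2 ≤ N := by
      intro q
      simp [hK, Finset.mem_product, Finset.mem_Icc]
    set tag : Fin n × ℕ → ℕ × Fin n × ℕ := fun q => (t + 1, q.1, q.2) with htag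
    have htaginj : Function.Injective tag := by
      intro a b hab
      rw [htag] at hab
      exact Prod.ext (congrArg (fun p : ℕ × Fin n × ℕ => p.2.1) hab)
        (congrArg (fun p : ℕ × Fin n × ℕ => p.2.2) hab)
    have hSsplit : S (t + 1) = S t ∪ K.image tag := by
      apply Finset.ext
      intro p
      rw [Finset.mem_union, hSmem, hSmem]
      constructor
      · rintro ⟨h1, h2, h3, h4⟩
        by_cases hc : p.1 ≤ t
        · exact Or.inl ⟨h1, hc, h3, h4⟩
        · right
          refine Finset.mem_image.mpr ⟨(p.2.1, p.2.2), ?_, ?_⟩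
          · rw [hKmemiff]
            exact ⟨h3, h4⟩
          · rw [htag]
            show (t + 1, p.2.1, p.2.2) = p
            have he1 : p.1 = t + 1 := by omega
            rw [← he1]
      · rintro (⟨h1, h2, h3, h4⟩ | hmem)
        · exact ⟨h1, by omega, h3, h4⟩
        · obtain ⟨q, hq, rfl⟩ := Finset.mem_image.mp hmem
          rw [hKmemiff] at hq
          simp only [htag]
          exact ⟨by omega, by omega, hq.1, hq.2⟩
    have hdisjS : Disjoint (S t) (K.image tag) := by
      rw [Finset.disjoint_left]
      intro p hp hp'
      obtain ⟨q, hq, rfl⟩ := Finset.mem_image.mp hp'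
      rw [hSmem] at hp
      simp only [htag] at hp
      omega
    have hcards : (S (t + 1)).card = (S t).card + K.card := by
      rw [hSsplit, Finset.card_union_of_disjoint hdisjS,
        Finset.card_image_of_injective _ htaginj]
    have hrt : ∀ E' ∈ (S (t + 1)).powerset,
        E' ∩ S t ∪ ((E' \ S t).image (fun p => (p.2.1, p.2.2))).image tag = E' := by
      intro E' hE'
      rw [Finset.mem_powerset] at hE'
      have himg : ((E' \ S t).image (fun p : ℕ × Fin n × ℕ => (p.2.1, p.2.2))).image tag
          = E' \ S t := by
        rw [Finset.image_image]
        have hid : ∀ p ∈ (E' \ S t : Finset (ℕ × Fin n × ℕ)),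
            (tag ∘ fun p : ℕ × Fin n × ℕ => (p.2.1, p.2.2)) p = id p := by
          intro p hp
          have hp1 := Finset.mem_sdiff.mp hp
          have hpS : p ∈ S (t + 1) := hE' hp1.1
          rw [hSsplit, Finset.mem_union] at hpS
          rcases hpS with hc | hc
          · exact absurd hc hp1.2
          · obtain ⟨q, hq, rfl⟩ := Finset.mem_image.mp hc
            rfl
        rw [Finset.image_congr hid, Finset.image_id]
      rw [himg]
      ext p
      simp only [Finset.mem_union, Finset.mem_inter, Finset.mem_sdiff]
      tauto
    -- reindex the sum over atoms of round t+1
    have hreindex : Lam (t + 1) = ∑ E ∈ (S t).powerset, ∑ G ∈ K.powerset,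
        2⁻¹ ^ (S (t + 1)).card *
          ENNReal.ofReal (∏ i ∈ B, RD (t + 1)
            (W (t + 1) i (rep (t + 1) (E ∪ G.image tag)))) := by
      rw [hLam]
      rw [← Finset.sum_product']
      apply Finset.sum_nbij' (i := fun E' => (E' ∩ S t, (E' \ S t).image
          (fun p => (p.2.1, p.2.2)))) (j := fun EG => EG.1 ∪ EG.2.image tag)
      · intro E' hE'
        have hE'sub := Finset.mem_powerset.mp hE'
        rw [Finset.mem_product, Finset.mem_powerset, Finset.mem_powerset]
        constructor
        · exact Finset.inter_subset_right
        · intro q hq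
          obtain ⟨p, hp, rfl⟩ := Finset.mem_image.mp hq
          have hp1 := Finset.mem_sdiff.mp hp
          have hpS : p ∈ S (t + 1) := hE'sub hp1.1
          rw [hSsplit, Finset.mem_union] at hpS
          rcases hpS with hc | hc
          · exact absurd hc hp1.2
          · obtain ⟨q', hq', rfl⟩ := Finset.mem_image.mp hc
            exact hq'
      · intro EG hEG
        rw [Finset.mem_product, Finset.mem_powerset, Finset.mem_powerset] at hEG
        rw [Finset.mem_powerset, hSsplit]
        apply Finset.union_subset
        · exact hEG.1.trans Finset.subset_union_left
        · exact (Finset.image_subset_image hEG.2).trans Finset.subset_union_right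
      · intro E' hE'
        exact hrt E' hE'
      · intro EG hEG
        rw [Finset.mem_product, Finset.mem_powerset, Finset.mem_powerset] at hEG
        have h1 : (EG.1 ∪ EG.2.image tag) ∩ S t = EG.1 := by
          ext p
          simp only [Finset.mem_inter, Finset.mem_union]
          constructor
          · rintro ⟨hc | hc, hpS⟩
            · exact hc
            · exact absurd hpS (Finset.disjoint_right.mp hdisjS
                ((Finset.image_subset_image hEG.2) hc))
          · intro hc
            exact ⟨Or.inl hc, hEG.1 hc⟩
        have h2 : (EG.1 ∪ EG.2.image tag) \ S t = EG.2.image tag := by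
          ext p
          simp only [Finset.mem_sdiff, Finset.mem_union]
          constructor
          · rintro ⟨hc | hc, hpS⟩
            · exact absurd (hEG.1 hc) hpS
            · exact hc
          · intro hc
            refine ⟨Or.inr hc, Finset.disjoint_right.mp hdisjS
              ((Finset.image_subset_image hEG.2) hc)⟩
        have h3 : (EG.2.image tag).image (fun p : ℕ × Fin n × ℕ => (p.2.1, p.2.2))
            = EG.2 := by
          rw [Finset.image_image]
          have hid : ∀ q ∈ EG.2, ((fun p : ℕ × Fin n × ℕ => (p.2.1, p.2.2)) ∘ tag) q
              = id q := fun q _ => rfl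
          rw [Finset.image_congr hid, Finset.image_id]
        rw [h1, h2, h3]
      · intro E' hE'
        rw [hrt E' hE']
    rw [hreindex, hLam]
    simp only
    apply Finset.sum_le_sum
    intro E hE
    have hEsub : E ⊆ S t := Finset.mem_powerset.mp hE
    set ω0 := rep t E with hω0
    set σ' := σ (t + 1) with hσ'
    set Wc : T → Fin n := fun j => W t j ω0 with hWc
    set Hc : T → ℕ := fun j => H t j ω0 with hHc
    have hI : HSNA.Invd Wc Hc := hIall t ht ω0
    have hkb : ∀ i : T, 1 ≤ (HSNA.keyf σ' Wc Hc i).2 ∧ (HSNA.keyf σ' Wc Hc i).2 ≤ N := by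
      intro i
      refine ⟨HSNA.nH_pos hI i, ?_⟩
      exact le_trans (HSNA.nH_le i) (le_trans (hI.2 i).2 (HSNA.Xc_le_card _))
    have hKmem : ∀ i ∈ B, σ' (Wc i) ≠ Wc i → HSNA.keyf σ' Wc Hc i ∈ K := by
      intro i _ _
      rw [hKmemiff]
      exact hkb i
    -- evaluation of the (t+1)-round state on each atom
    have heval : ∀ G ∈ K.powerset, ∀ i : T,
        W (t + 1) i (rep (t + 1) (E ∪ G.image tag)) =
          HSNA.outf σ' Wc Hc i (decide (HSNA.keyf σ' Wc Hc i ∈ G)) := by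
      intro G hG i
      have hGsub : G ⊆ K := Finset.mem_powerset.mp hG
      set ω' := rep (t + 1) (E ∪ G.image tag) with hω'def
      have hω'atom := hrepmem (t + 1) (E ∪ G.image tag)
      rw [hmem_atom] at hω'atom
      have hω'E : ω' ∈ atom t E := by
        rw [hmem_atom]
        intro p hp
        have hp' : p ∈ S (t + 1) := by
          rw [hSsplit]
          exact Finset.mem_union_left _ hp
        rw [hω'atom p hp']
        apply decide_eq_decide.mpr
        rw [Finset.mem_union]
        constructor
        · rintro (hc | hc)
          · exact hc
          · exact absurd hp (Finset.disjoint_right.mp hdisjS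
              ((Finset.image_subset_image hGsub) hc))
        · exact Or.inl
      have hag := hagree t ht E ω' ω0 hω'E (hrepmem t E)
      have hWeq : (fun j => W t j ω') = Wc := funext fun j => (hag j).1
      have hHeq : (fun j => H t j ω') = Hc := funext fun j => (hag j).2
      have hstep := (HSNA.step_eq hX hstep_unmatched hstep_low hstep_high t i ω').2
      rw [hWeq, hHeq] at hstep
      rw [hstep]
      congr 1
      have hpk : tag (HSNA.keyf σ' Wc Hc i) ∈ S (t + 1) := by
        rw [hSmem]
        simp only [htag]
        exact ⟨by omega, le_refl _, (hkb i).1, (hkb i).2⟩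
      have hflipeq := hω'atom _ hpk
      rw [hflipeq]
      apply decide_eq_decide.mpr
      rw [Finset.mem_union]
      constructor
      · rintro (hc | hc)
        · exfalso
          have := hEsub hc
          rw [hSmem] at this
          simp only [htag] at this
          omega
        · obtain ⟨q, hq, he⟩ := Finset.mem_image.mp hc
          rwa [← htaginj he]
      · intro hc
        exact Or.inr (Finset.mem_image_of_mem _ hc)
    -- the core inequality
    have hcore := HSNA.core_sum (hinv (t + 1)) hI (RD (t + 1)) (hRDnn (t + 1)) B K hKmem
    calc ∑ G ∈ K.powerset, 2⁻¹ ^ (S (t + 1)).card *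
          ENNReal.ofReal (∏ i ∈ B, RD (t + 1)
            (W (t + 1) i (rep (t + 1) (E ∪ G.image tag))))
        = 2⁻¹ ^ (S (t + 1)).card * ENNReal.ofReal (∑ G ∈ K.powerset,
            ∏ i ∈ B, RD (t + 1)
              (HSNA.outf σ' Wc Hc i (decide (HSNA.keyf σ' Wc Hc i ∈ G)))) := by
          rw [ENNReal.ofReal_sum_of_nonneg
            (fun G _ => Finset.prod_nonneg fun i _ => hRDnn _ _), Finset.mul_sum]
          apply Finset.sum_congr rfl
          intro G hG
          congr 2
          apply Finset.prod_congr rfl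
          intro i _
          rw [heval G hG i]
      _ ≤ 2⁻¹ ^ (S (t + 1)).card * ENNReal.ofReal (2 ^ K.card *
            ∏ i ∈ B, (if σ' (Wc i) = Wc i then RD (t + 1) (Wc i)
              else (RD (t + 1) (Wc i) + RD (t + 1) (σ' (Wc i))) / 2)) := by
          apply mul_le_mul_right
          exact ENNReal.ofReal_le_ofReal hcore
      _ = 2⁻¹ ^ (S t).card * ENNReal.ofReal (∏ i ∈ B, RD t (W t i (rep t E))) := by
          have hprodeq : (∏ i ∈ B, (if σ' (Wc i) = Wc i then RD (t + 1) (Wc i)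
              else (RD (t + 1) (Wc i) + RD (t + 1) (σ' (Wc i))) / 2))
              = ∏ i ∈ B, RD t (W t i (rep t E)) := by
            apply Finset.prod_congr rfl
            intro i _
            rw [← hRDsucc t ht2 (Wc i)]
          rw [ENNReal.ofReal_mul (by positivity), hprodeq, hcards, pow_add]
          have h2 : ENNReal.ofReal ((2:ℝ) ^ K.card) = 2 ^ K.card := by
            rw [ENNReal.ofReal_pow (by norm_num)]
            norm_num
          rw [h2]
          have h3 : (2⁻¹ : ENNReal) ^ K.card * 2 ^ K.card = 1 := by
            rw [← mul_pow, ENNReal.inv_mul_cancel (by norm_num) (by norm_num), one_pow]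
          calc (2⁻¹:ENNReal) ^ (S t).card * 2⁻¹ ^ K.card *
                (2 ^ K.card * ENNReal.ofReal (∏ i ∈ B, RD t (W t i (rep t E))))
              = 2⁻¹ ^ (S t).card * ((2⁻¹ ^ K.card * 2 ^ K.card) *
                ENNReal.ofReal (∏ i ∈ B, RD t (W t i (rep t E)))) := by ring
            _ = 2⁻¹ ^ (S t).card * ENNReal.ofReal (∏ i ∈ B, RD t (W t i (rep t E))) := by
                rw [h3, one_mul]
  -- chain the steps
  have hchain : ∀ k, t₁ + k ≤ t₂ → Lam (t₁ + k) ≤ Lam t₁ := by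
    intro k
    induction k with
    | zero => intro _; exact le_refl _
    | succ k ih =>
      intro hk
      exact le_trans (hstepL (t₁ + k) (by omega) (by omega)) (ih (by omega))
  have hLe : Lam t₂ ≤ Lam t₁ := by
    have := hchain (t₂ - t₁) (by omega)
    rwa [show t₁ + (t₂ - t₁) = t₂ by omega] at this
  calc μ {ω | ∀ i ∈ B, W t₂ i ω ∈ D} ≤ Lam t₂ := hfinal
    _ ≤ Lam t₁ := hLe
    _ = ENNReal.ofReal (∏ i ∈ B, ∑ v ∈ D, Q t₂ (w i) v) := hinitial
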